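/- In the algebra A' = k⟨x,y,z⟩/(yz−αzy+x², zx−αxz, xy−αyx) with α³ ≠ 0,1, the coefficients κ^n defined by g^n = ∑_{j=0}^{n} κ^n_j·x^{3n−2j}y^jz^j (where g = xyz + (1−α³)⁻¹x³) satisfy the recursion κ^{n+1}_j = α^{−j+1}·κ^n_{j−1} + α^{−3j}·(1−α³)^{−1}·κ^n_j for 0 ≤ j ≤ n+1, with the conventions κ^n_{−1} = κ^n_{n+1} = 0. -/

import Mathlib

noncomputable section

/-- Defining relations of the Type S' Calabi–Yau quantum polynomial algebra
`A' = k⟨x,y,z⟩/(yz - αzy + x², zx - αxz, xy - αyx)`. -/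
inductive SRel {k : Type} [Field k] (α : k) :
    FreeAlgebra k (Fin 3) → FreeAlgebra k (Fin 3) → Prop
  | g1 : SRel α (FreeAlgebra.ι k 1 * FreeAlgebra.ι k 2)
      (α • (FreeAlgebra.ι k 2 * FreeAlgebra.ι k 1) - FreeAlgebra.ι k 0 * FreeAlgebra.ι k 0)
  | g2 : SRel α (FreeAlgebra.ι k 2 * FreeAlgebra.ι k 0)
      (α • (FreeAlgebra.ι k 0 * FreeAlgebra.ι k 2))
  | g3 : SRel α (FreeAlgebra.ι k 0 * FreeAlgebra.ι k 1)
      (α • (FreeAlgebra.ι k 1 * FreeAlgebra.ι k 0))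

/-- The image of `x` in `A'`. -/
def SX {k : Type} [Field k] (α : k) : RingQuot (SRel α) :=
  RingQuot.mkAlgHom k (SRel α) (FreeAlgebra.ι k 0)

/-- The image of `y` in `A'`. -/
def SY {k : Type} [Field k] (α : k) : RingQuot (SRel α) :=
  RingQuot.mkAlgHom k (SRel α) (FreeAlgebra.ι k 1)

/-- The image of `z` in `A'`. -/
def SZ {k : Type} [Field k] (α : k) : RingQuot (SRel α) :=
  RingQuot.mkAlgHom k (SRel α) (FreeAlgebra.ι k 2)

/-- The central element `g = xyz + (1-α³)⁻¹ x³` of `A'`. -/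
def SG {k : Type} [Field k] (α : k) : RingQuot (SRel α) :=
  SX α * SY α * SZ α + (1 - α ^ 3)⁻¹ • (SX α) ^ 3

namespace Stmt9Aux
variable {k : Type} [Field k]

section general
variable {R : Type} [Ring R] [Algebra k R]

lemma qpow_left {a b : R} {q : k} (h : b * a = q • (a * b)) (j : ℕ) :
    b ^ j * a = q ^ j • (a * b ^ j) := by
  induction j with
  | zero => simp
  | succ n ih =>
    rw [pow_succ b, mul_assoc, h, mul_smul_comm, ← mul_assoc, ih, smul_mul_assoc,
      smul_smul, mul_assoc, ← pow_succ b, ← pow_succ' q]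

lemma qpow_right {a b : R} {q : k} (h : b * a = q • (a * b)) (m : ℕ) :
    b * a ^ m = q ^ m • (a ^ m * b) := by
  induction m with
  | zero => simp
  | succ n ih =>
    rw [pow_succ a, ← mul_assoc, ih, smul_mul_assoc, mul_assoc, h, mul_smul_comm,
      smul_smul, ← mul_assoc, ← pow_succ a, ← pow_succ q]

lemma qpow_pow {a b : R} {q : k} (h : b * a = q • (a * b)) (j m : ℕ) :
    b ^ j * a ^ m = (q ^ j) ^ m • (a ^ m * b ^ j) :=
  qpow_right (qpow_left h j) m

lemma qswap {a b : R} {q : k} (h : b * a = q • (a * b)) (t : R) :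
    b * (a * t) = q • (a * (b * t)) := by
  rw [← mul_assoc, h, smul_mul_assoc, mul_assoc]

end general

variable (α : k)

lemma rel_yz : SY α * SZ α = α • (SZ α * SY α) - SX α * SX α := by
  have h := RingQuot.mkAlgHom_rel k (SRel.g1 (k := k) (α := α))
  simpa [SX, SY, SZ, map_mul, map_sub, map_smul] using h

lemma rel_zx : SZ α * SX α = α • (SX α * SZ α) := by
  have h := RingQuot.mkAlgHom_rel k (SRel.g2 (k := k) (α := α))
  simpa [SX, SZ, map_mul, map_smul] using h

lemma rel_xy : SX α * SY α = α • (SY α * SX α) := by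
  have h := RingQuot.mkAlgHom_rel k (SRel.g3 (k := k) (α := α))
  simpa [SX, SY, map_mul, map_smul] using h

variable {α}

lemma rel_yx (hα : α ≠ 0) : SY α * SX α = α⁻¹ • (SX α * SY α) := by
  rw [rel_xy, inv_smul_smul₀ hα]

lemma rel_zy (hα : α ≠ 0) :
    SZ α * SY α = α⁻¹ • (SY α * SZ α) + α⁻¹ • (SX α ^ 2) := by
  have h : α • (SZ α * SY α) = SY α * SZ α + SX α ^ 2 := by
    rw [rel_yz, pow_two]; abel
  calc SZ α * SY α = α⁻¹ • (α • (SZ α * SY α)) := (inv_smul_smul₀ hα _).symm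
    _ = _ := by rw [h, smul_add]

/-- `z^(j+1) y = α^{-(j+1)} y z^(j+1) + α^{-(j+1)} S_{j+1} x² z^j`. -/
lemma z_pow_y (hα : α ≠ 0) (j : ℕ) :
    SZ α ^ (j + 1) * SY α
      = (α⁻¹) ^ (j + 1) • (SY α * SZ α ^ (j + 1))
        + ((α⁻¹) ^ (j + 1) * ∑ ν ∈ Finset.range (j + 1), (α ^ 3) ^ ν)
            • (SX α ^ 2 * SZ α ^ j) := by
  induction j with
  | zero => simpa using rel_zy hα
  | succ m ih =>
    have hZX2 : SZ α * SX α ^ 2 = (α ^ 2) • (SX α ^ 2 * SZ α) := by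
      simpa using qpow_right (rel_zx α) 2
    calc SZ α ^ (m + 2) * SY α
        = SZ α * (SZ α ^ (m + 1) * SY α) := by
          rw [pow_succ' (SZ α), mul_assoc]
      _ = (α⁻¹) ^ (m + 1) • ((SZ α * SY α) * SZ α ^ (m + 1))
          + ((α⁻¹) ^ (m + 1) * ∑ ν ∈ Finset.range (m + 1), (α ^ 3) ^ ν)
              • ((SZ α * SX α ^ 2) * SZ α ^ m) := by
          rw [ih]; simp only [mul_add, mul_smul_comm, mul_assoc]
      _ = _ := by
          rw [rel_zy hα, hZX2]
          simp only [add_mul, smul_mul_assoc, smul_smul, smul_add, mul_assoc,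
            ← pow_succ' (SZ α), geom_sum_succ]
          match_scalars
          · field_simp
            linear_combination (-(α⁻¹ * α⁻¹ ^ m)) * (mul_inv_cancel₀ hα)
          · field_simp
            linear_combination (-(α⁻¹ * α⁻¹ ^ m * (1 + α ^ 3 + α ^ 6 * ∑ x ∈ Finset.range m, (α ^ 3) ^ x)))
              * (mul_inv_cancel₀ hα)


/-- Multiplying a monomial `x^a y^j z^j` by `g` on the right. -/
lemma term_g (hα : α ≠ 0) (h3 : α ^ 3 ≠ 1) (a j : ℕ) :
    (SX α ^ a * SY α ^ j * SZ α ^ j) * SG α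
      = (α⁻¹) ^ j • (SX α ^ (a + 1) * SY α ^ (j + 1) * SZ α ^ (j + 1))
        + ((α⁻¹) ^ (3 * j) * (1 - α ^ 3)⁻¹)
            • (SX α ^ (a + 3) * SY α ^ j * SZ α ^ j) := by
  have h1 : (1 : k) - α ^ 3 ≠ 0 := sub_ne_zero.mpr (Ne.symm h3)
  have hS : ∀ jj : ℕ, (∑ ν ∈ Finset.range jj, (α ^ 3) ^ ν)
      = (1 - (α ^ 3) ^ jj) * (1 - α ^ 3)⁻¹ := by
    intro jj
    rw [geom_sum_eq h3]
    rw [div_eq_iff (sub_ne_zero.mpr h3)]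
    field_simp
    ring
  rcases j with _ | m
  · simp only [pow_zero, one_mul, mul_one, SG, Nat.mul_zero, Nat.zero_add,
      Finset.range_zero, Finset.sum_empty]
    simp only [mul_add, mul_smul_comm, smul_smul, pow_succ, pow_zero, one_mul,
      mul_one, pow_add, mul_assoc]
    match_scalars <;> ring
  · set j := m + 1 with hj
    have hZjX : SZ α ^ j * SX α = (α ^ j) • (SX α * SZ α ^ j) := qpow_left (rel_zx α) j
    have hYjX : SY α ^ j * SX α = ((α⁻¹) ^ j) • (SX α * SY α ^ j) := qpow_left (rel_yx hα) j
    have hZjX3 : SZ α ^ j * SX α ^ 3 = ((α ^ j) ^ 3) • (SX α ^ 3 * SZ α ^ j) :=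
      qpow_pow (rel_zx α) j 3
    have hYjX3 : SY α ^ j * SX α ^ 3 = (((α⁻¹) ^ j) ^ 3) • (SX α ^ 3 * SY α ^ j) :=
      qpow_pow (rel_yx hα) j 3
    have hYjX2 : SY α ^ j * SX α ^ 2 = (((α⁻¹) ^ j) ^ 2) • (SX α ^ 2 * SY α ^ j) :=
      qpow_pow (rel_yx hα) j 2
    have key : SZ α ^ j * (SX α * (SY α * SZ α))
        = (α ^ j * (α⁻¹) ^ j) • (SX α * (SY α * SZ α ^ (j + 1)))
          + (α ^ j * ((α⁻¹) ^ j * ∑ ν ∈ Finset.range j, (α ^ 3) ^ ν))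
              • (SX α * (SX α ^ 2 * SZ α ^ j)) := by
      rw [qswap hZjX]
      have : SZ α ^ j * (SY α * SZ α)
          = (α⁻¹) ^ j • (SY α * SZ α ^ (j + 1))
            + ((α⁻¹) ^ j * ∑ ν ∈ Finset.range j, (α ^ 3) ^ ν) • (SX α ^ 2 * SZ α ^ j) := by
        rw [← mul_assoc, hj, z_pow_y hα m, add_mul, smul_mul_assoc, smul_mul_assoc,
          mul_assoc, mul_assoc, ← pow_succ, ← pow_succ]
      rw [this]
      simp only [mul_add, mul_smul_comm, smul_add, smul_smul]
    calc (SX α ^ a * SY α ^ j * SZ α ^ j) * SG α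
        = SX α ^ a * (SY α ^ j * (SZ α ^ j * (SX α * (SY α * SZ α))))
          + (1 - α ^ 3)⁻¹ • (SX α ^ a * (SY α ^ j * (SZ α ^ j * SX α ^ 3))) := by
          simp only [SG, mul_add, mul_smul_comm, mul_assoc]
      _ = _ := by
          rw [key, hZjX3]
          simp only [mul_add, mul_smul_comm, smul_smul]
          rw [qswap hYjX]
          have hX3 : SX α * SX α ^ 2 = SX α ^ 3 := (pow_succ' _ 2).symm
          rw [← mul_assoc (SX α) (SX α ^ 2), hX3]
          simp only [qswap hYjX3]
          rw [← mul_assoc (SY α ^ j) (SY α), ← pow_succ]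
          simp only [mul_smul_comm, smul_smul]
          rw [hS j]
          simp only [pow_add, pow_one]
          simp only [mul_assoc]
          have hu : α ^ j * α⁻¹ ^ j = 1 := by
            rw [← mul_pow, mul_inv_cancel₀ hα, one_pow]
          match_scalars
          · linear_combination (α⁻¹ ^ j) * hu
          · linear_combination ((1 - α ^ 3)⁻¹ * α⁻¹ ^ (3 * j) * (1 - (α ^ 3) ^ j)) * hu


variable (α) in
/-- The coefficients `κ^n_j`. -/
def kap : ℕ → ℕ → k
  | 0, j => if j = 0 then 1 else 0
  | n + 1, j =>
      α * (α⁻¹) ^ j * (if j = 0 then 0 else kap n (j - 1))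
        + (α⁻¹) ^ (3 * j) * (1 - α ^ 3)⁻¹ * kap n j

lemma kap_zero (j : ℕ) : kap α 0 j = if j = 0 then 1 else 0 := by rw [kap]

lemma kap_succ (n j : ℕ) :
    kap α (n + 1) j
      = α * (α⁻¹) ^ j * (if j = 0 then 0 else kap α n (j - 1))
        + (α⁻¹) ^ (3 * j) * (1 - α ^ 3)⁻¹ * kap α n j := by rw [kap]

lemma kap_vanish : ∀ n j : ℕ, n < j → kap α n j = 0 := by
  intro n
  induction n with
  | zero => intro j hj; rw [kap_zero, if_neg (by omega)]
  | succ m ih =>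
    intro j hj
    rw [kap_succ, ih j (by omega), if_neg (by omega), ih (j - 1) (by omega)]
    ring

/-- The expansion of `g^n`. -/
lemma expand (hα : α ≠ 0) (h3 : α ^ 3 ≠ 1) (n : ℕ) :
    SG α ^ n = ∑ j ∈ Finset.range (n + 1),
      kap α n j • (SX α ^ (3 * n - 2 * j) * SY α ^ j * SZ α ^ j) := by
  induction n with
  | zero => simp [kap_zero]
  | succ n ih =>
    rw [pow_succ, ih, Finset.sum_mul]
    have step : ∀ j ∈ Finset.range (n + 1),
        (kap α n j • (SX α ^ (3 * n - 2 * j) * SY α ^ j * SZ α ^ j)) * SG α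
          = (kap α n j * (α⁻¹) ^ j)
              • (SX α ^ (3 * (n + 1) - 2 * (j + 1)) * SY α ^ (j + 1) * SZ α ^ (j + 1))
            + (kap α n j * ((α⁻¹) ^ (3 * j) * (1 - α ^ 3)⁻¹))
              • (SX α ^ (3 * (n + 1) - 2 * j) * SY α ^ j * SZ α ^ j) := by
      intro j hj
      have hj' : j ≤ n := by simpa [Nat.lt_succ_iff] using hj
      have e1 : 3 * n - 2 * j + 1 = 3 * (n + 1) - 2 * (j + 1) := by omega
      have e3 : 3 * n - 2 * j + 3 = 3 * (n + 1) - 2 * j := by omega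
      rw [smul_mul_assoc, term_g hα h3, smul_add, smul_smul, smul_smul, e1, e3]
    rw [Finset.sum_congr rfl step, Finset.sum_add_distrib]
    -- now handle the two sums
    rw [Finset.sum_range_succ' (fun j => kap α (n + 1) j
      • (SX α ^ (3 * (n + 1) - 2 * j) * SY α ^ j * SZ α ^ j)) (n + 1)]
    have hfirst : ∀ j ∈ Finset.range (n + 1),
        kap α (n + 1) (j + 1)
            • (SX α ^ (3 * (n + 1) - 2 * (j + 1)) * SY α ^ (j + 1) * SZ α ^ (j + 1))
          = (kap α n j * (α⁻¹) ^ j)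
              • (SX α ^ (3 * (n + 1) - 2 * (j + 1)) * SY α ^ (j + 1) * SZ α ^ (j + 1))
            + (kap α n (j + 1) * ((α⁻¹) ^ (3 * (j + 1)) * (1 - α ^ 3)⁻¹))
              • (SX α ^ (3 * (n + 1) - 2 * (j + 1)) * SY α ^ (j + 1) * SZ α ^ (j + 1)) := by
      intro j hj
      rw [← add_smul, kap_succ, if_neg (by omega), Nat.add_sub_cancel]
      congr 1
      have hu : α * α⁻¹ = 1 := mul_inv_cancel₀ hα
      ring_nf
      linear_combination (kap α n j * (α⁻¹) ^ j) * hu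
    rw [Finset.sum_congr rfl hfirst, Finset.sum_add_distrib]
    have hlast : kap α (n + 1) 0
        • (SX α ^ (3 * (n + 1) - 2 * 0) * SY α ^ 0 * SZ α ^ 0)
        = (kap α n 0 * ((α⁻¹) ^ (3 * 0) * (1 - α ^ 3)⁻¹))
          • (SX α ^ (3 * (n + 1) - 2 * 0) * SY α ^ 0 * SZ α ^ 0) := by
      congr 1
      rw [kap_succ, if_pos rfl]
      ring
    rw [hlast]
    have hsecond : ∑ j ∈ Finset.range (n + 1),
          (kap α n j * ((α⁻¹) ^ (3 * j) * (1 - α ^ 3)⁻¹))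
            • (SX α ^ (3 * (n + 1) - 2 * j) * SY α ^ j * SZ α ^ j)
        = (∑ j ∈ Finset.range (n + 1),
            (kap α n (j + 1) * ((α⁻¹) ^ (3 * (j + 1)) * (1 - α ^ 3)⁻¹))
              • (SX α ^ (3 * (n + 1) - 2 * (j + 1)) * SY α ^ (j + 1) * SZ α ^ (j + 1)))
          + (kap α n 0 * ((α⁻¹) ^ (3 * 0) * (1 - α ^ 3)⁻¹))
            • (SX α ^ (3 * (n + 1) - 2 * 0) * SY α ^ 0 * SZ α ^ 0) := by
      conv_rhs => rw [← Finset.sum_range_succ' (fun j => (kap α n j * ((α⁻¹) ^ (3 * j) * (1 - α ^ 3)⁻¹))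
        • (SX α ^ (3 * (n + 1) - 2 * j) * SY α ^ j * SZ α ^ j)) (n + 1)]
      conv_rhs => rw [Finset.sum_range_succ]
      rw [kap_vanish n (n + 1) (by omega)]
      simp
    rw [hsecond]
    abel

end Stmt9Aux

theorem stmt9 {k : Type} [Field k] [IsAlgClosed k] [CharZero k] (α : k)
    (hα : α ≠ 0) (hα3 : α ^ 3 ≠ 1) :
    ∃ κ : ℕ → ℕ → k,
      (∀ n : ℕ, 1 ≤ n →
        (SG α) ^ n =
          ∑ j ∈ Finset.range (n + 1),
            κ n j • ((SX α) ^ (3 * n - 2 * j) * (SY α) ^ j * (SZ α) ^ j)) ∧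
      (∀ n j : ℕ, n < j → κ n j = 0) ∧
      (∀ n j : ℕ, j ≤ n + 1 →
        κ (n + 1) j =
          α ^ (1 - (j : ℤ)) * (if j = 0 then 0 else κ n (j - 1)) +
            α ^ (-(3 : ℤ) * j) * (1 - α ^ 3)⁻¹ * κ n j) := by
  refine ⟨Stmt9Aux.kap α, ?_, Stmt9Aux.kap_vanish, ?_⟩
  · intro n _
    exact Stmt9Aux.expand hα hα3 n
  · intro n j _
    rw [Stmt9Aux.kap_succ]
    have e1 : α ^ (1 - (j : ℤ)) = α * α⁻¹ ^ j := by
      rw [zpow_sub₀ hα, zpow_one, zpow_natCast, div_eq_mul_inv, ← inv_pow]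
    have e2 : α ^ (-(3 : ℤ) * j) = α⁻¹ ^ (3 * j) := by
      rw [show (-(3 : ℤ) * j) = -((3 * j : ℕ) : ℤ) by push_cast; ring,
        zpow_neg, zpow_natCast, inv_pow]
    rw [e1, e2]
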